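/- Let H(n) = ⌊(√2 − 1)(n+1)⌋, L^P(n) = ⌊n(1+√2)⌋ and U^P(n) = ⌊n(1 + √2/2)⌋. Then for all n ≥ 1, H(L^P(n)) = n and H(U^P(n)) = ⌊n·√2/2⌋. -/

import Mathlib

/-- The Hofstadter Pell sequence `H(n) = ⌊(√2 − 1)(n+1)⌋` on the Beatty pair
`L^P(n) = ⌊n(1+√2)⌋`, `U^P(n) = ⌊n(1+√2/2)⌋`: for all `n ≥ 1`,
`H(L^P(n)) = n` and `H(U^P(n)) = ⌊n·√2/2⌋`. -/
theorem hofstadter_pell_on_beatty_pair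
    (H LP UP : ℕ → ℕ)
    (hH : ∀ n : ℕ, H n = ⌊(Real.sqrt 2 - 1) * ((n : ℝ) + 1)⌋₊)
    (hLP : ∀ n : ℕ, LP n = ⌊(n : ℝ) * (1 + Real.sqrt 2)⌋₊)
    (hUP : ∀ n : ℕ, UP n = ⌊(n : ℝ) * (1 + Real.sqrt 2 / 2)⌋₊) :
    ∀ n : ℕ, 1 ≤ n → H (LP n) = n ∧ H (UP n) = ⌊(n : ℝ) * Real.sqrt 2 / 2⌋₊ := by
  intro n hn
  have hn0 : n ≠ 0 := by omega
  set s := Real.sqrt 2 with hs_def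
  have hs2 : s * s = 2 := Real.mul_self_sqrt (by norm_num)
  have hs1 : 1 < s := by nlinarith [Real.sqrt_nonneg 2]
  have hs3 : s < 3/2 := by nlinarith [Real.sqrt_nonneg 2]
  have hirr : Irrational s := irrational_sqrt_two
  have hn1 : (1:ℝ) ≤ (n:ℝ) := by exact_mod_cast hn
  constructor
  · rw [hLP, hH]
    set m := ⌊(n : ℝ) * (1 + s)⌋₊ with hm
    have h1 : (m:ℝ) ≤ (n:ℝ) * (1+s) := Nat.floor_le (by positivity)
    have hirr2 : Irrational ((n:ℝ) * (1+s)) := by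
      have h := (hirr.natCast_mul hn0).natCast_add n
      simpa [mul_add, mul_one] using h
    have h1s : (m:ℝ) < (n:ℝ) * (1+s) :=
      lt_of_le_of_ne h1 (fun h => (hirr2.ne_nat m) h.symm)
    have h2 : (n:ℝ) * (1+s) < (m:ℝ) + 1 := Nat.lt_floor_add_one _
    rw [Nat.floor_eq_iff (by nlinarith)]
    constructor
    · nlinarith
    · nlinarith
  · rw [hUP, hH]
    have hrw : (n : ℝ) * (1 + s / 2) = (n:ℝ) * s / 2 + (n:ℕ) := by ring
    rw [hrw, Nat.floor_add_natCast (by positivity)]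
    set k := ⌊(n : ℝ) * s / 2⌋₊ with hk
    have hk1 : (k:ℝ) ≤ (n:ℝ) * s / 2 := Nat.floor_le (by positivity)
    have hirr3 : Irrational ((n:ℝ) * s / 2) := by
      have h := (hirr.natCast_mul hn0).div_natCast (two_ne_zero)
      simpa using h
    have hk1s : (k:ℝ) < (n:ℝ) * s / 2 :=
      lt_of_le_of_ne hk1 (fun h => (hirr3.ne_nat k) h.symm)
    have hk2 : (n:ℝ) * s / 2 < (k:ℝ) + 1 := Nat.lt_floor_add_one _
    push_cast
    rw [Nat.floor_eq_iff (by nlinarith)]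
    have hpos : (0:ℝ) < 2 - s := by nlinarith
    constructor
    · nlinarith [mul_pos (sub_pos.2 hk1s) hpos]
    · nlinarith [mul_pos (sub_pos.2 hk2) hpos]
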